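/- Let s, t be positive real numbers with s/t irrational, let S²_{s,t} = S³_{s,t}/N be the orbit space of the ellipsoid under the componentwise action of N = {(e^{2πisθ}, e^{2πitθ}) : θ ∈ ℝ}, with the quotient topology, and let U_S = {[z:w] ∈ S²_{s,t} : w ≠ 0}. The countable group Γ_{s/t} = {e^{2πiks/t} : k ∈ ℤ} acts on B(t) = {z ∈ ℂ : |z|² < t} by complex multiplication, and the map B(t)/Γ_{s/t} → U_S sending the class [z] to the orbit [z : √(s − (s/t)|z|²)] is well defined and is a homeomorphism, where B(t)/Γ_{s/t} carries the quotient topology and U_S the subspace topology. -/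

import Mathlib

open Complex

/-- `expc x = e^{2πix}`. -/
noncomputable def expc (x : ℝ) : ℂ := Complex.exp (2 * Real.pi * Complex.I * x)

/-- The ellipsoid `S³_{s,t} = {(z,w) ∈ ℂ² : s|z|² + t|w|² = st}`. -/
def ellipsoidR (s t : ℝ) : Set (ℂ × ℂ) :=
  {z | s * ‖z.1‖ ^ 2 + t * ‖z.2‖ ^ 2 = s * t}

/-- Orbit relation of the componentwise action of `N = {(e^{2πisθ}, e^{2πitθ}) : θ ∈ ℝ}`
on the ellipsoid `S³_{s,t}`. -/
noncomputable def orbitRelR (s t : ℝ) (x y : ellipsoidR s t) : Prop :=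
  ∃ θ : ℝ, (y : ℂ × ℂ) = (expc (s * θ) * (x : ℂ × ℂ).1, expc (t * θ) * (x : ℂ × ℂ).2)

/-- The ball `B(t) = {z ∈ ℂ : |z|² < t}`. -/
def ballR (t : ℝ) : Set ℂ := {z | ‖z‖ ^ 2 < t}

/-- Orbit relation of the action of `Γ_{s/t} = {e^{2πiks/t} : k ∈ ℤ}` on `B(t)` by complex
multiplication. -/
noncomputable def ballRelR (s t : ℝ) (x y : ballR t) : Prop :=
  ∃ k : ℤ, (y : ℂ) = expc ((k : ℝ) * (s / t)) * (x : ℂ)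

/-- `U_S = {[z:w] ∈ S²_{s,t} : w ≠ 0}`. -/
noncomputable def USR (s t : ℝ) : Set (Quot (orbitRelR s t)) :=
  {o | ∃ x : ellipsoidR s t, Quot.mk (orbitRelR s t) x = o ∧ (x : ℂ × ℂ).2 ≠ 0}

/-! ### auxiliary lemmas about `expc` -/

lemma expc_add' (a b : ℝ) : expc (a + b) = expc a * expc b := by
  simp only [expc, Complex.ofReal_add, mul_add, Complex.exp_add]

lemma expc_zero' : expc 0 = 1 := by simp [expc]

lemma abs_expc' (a : ℝ) : ‖(expc a)‖ = 1 := by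
  rw [expc, Complex.norm_exp]
  simp [mul_comm, mul_assoc, Complex.mul_I_re]

lemma expc_ne_zero' (a : ℝ) : expc a ≠ 0 := Complex.exp_ne_zero _

lemma expc_neg_mul' (a : ℝ) : expc (-a) * expc a = 1 := by
  rw [← expc_add']; simp [expc_zero']

lemma expc_cancel' (a : ℝ) (u : ℂ) : expc (-a) * (expc a * u) = u := by
  rw [← mul_assoc, expc_neg_mul', one_mul]

lemma expc_eq_one_iff' (x : ℝ) : expc x = 1 ↔ ∃ k : ℤ, x = k := by
  rw [expc, Complex.exp_eq_one_iff]
  constructor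
  · rintro ⟨n, hn⟩
    refine ⟨n, ?_⟩
    have h2 : (2 * (Real.pi : ℂ) * Complex.I) ≠ 0 := by
      simp [Real.pi_ne_zero, Complex.I_ne_zero]
    have hx : (2 * (Real.pi : ℂ) * Complex.I) * x = (2 * (Real.pi : ℂ) * Complex.I) * n := by
      rw [hn]; ring
    have := mul_left_cancel₀ h2 hx
    exact_mod_cast this
  · rintro ⟨k, rfl⟩
    exact ⟨k, by push_cast; ring⟩

lemma expc_cont : Continuous expc := by
  exact Complex.continuous_exp.comp (continuous_const.mul Complex.continuous_ofReal)

noncomputable def thetaB (t : ℝ) (w₀ w : ℂ) : ℝ :=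
  -((w / w₀).arg + w₀.arg) / (2 * Real.pi * t)

lemma expc_thetaB_spec (t : ℝ) (ht : t ≠ 0) (w₀ w : ℂ) (hw₀ : w₀ ≠ 0) (hw : w ≠ 0) :
    expc (t * thetaB t w₀ w) * w = (‖w‖ : ℂ) := by
  have hπ : (Real.pi : ℝ) ≠ 0 := Real.pi_ne_zero
  have hπ' : ((Real.pi : ℂ)) ≠ 0 := by exact_mod_cast hπ
  have ht' : ((t : ℂ)) ≠ 0 := by exact_mod_cast ht
  have h1 : (2 * Real.pi * Complex.I * (((t * thetaB t w₀ w : ℝ)) : ℂ))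
      = -(((w / w₀).arg : ℂ) * Complex.I) + -((w₀.arg : ℂ) * Complex.I) := by
    rw [thetaB]; push_cast; field_simp; ring
  rw [expc, h1, Complex.exp_add, Complex.exp_neg, Complex.exp_neg]
  have e1 : Complex.exp (((w / w₀).arg : ℂ) * Complex.I) = (w / w₀) / (‖(w / w₀)‖ : ℂ) := by
    rw [eq_div_iff (by simp [hw, hw₀] : (‖(w / w₀)‖ : ℂ) ≠ 0), mul_comm,
      Complex.norm_mul_exp_arg_mul_I]
  have e2 : Complex.exp ((w₀.arg : ℂ) * Complex.I) = w₀ / (‖w₀‖ : ℂ) := by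
    rw [eq_div_iff (by simp [hw₀] : (‖w₀‖ : ℂ) ≠ 0), mul_comm,
      Complex.norm_mul_exp_arg_mul_I]
  rw [e1, e2]
  have habs : ‖(w / w₀)‖ = ‖w‖ / ‖w₀‖ := norm_div _ _
  rw [habs]
  have hw' : (‖w‖ : ℂ) ≠ 0 := by simp [hw]
  have hw₀' : (‖w₀‖ : ℂ) ≠ 0 := by simp [hw₀]
  field_simp
  rw [Complex.ofReal_div, div_mul_cancel₀ _ hw₀']

/-! ### the two relations are equivalences -/

lemma ballRel_equiv (s t : ℝ) : Equivalence (ballRelR s t) := by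
  constructor
  · intro x
    exact ⟨0, by norm_num [expc_zero']⟩
  · rintro x y ⟨k, hk⟩
    refine ⟨-k, ?_⟩
    rw [hk]
    push_cast
    rw [← mul_assoc, ← expc_add']
    norm_num [expc_zero']
  · rintro x y z ⟨k, hk⟩ ⟨l, hl⟩
    refine ⟨l + k, ?_⟩
    rw [hl, hk, ← mul_assoc, ← expc_add']
    push_cast
    ring_nf

lemma orbitRel_equiv (s t : ℝ) : Equivalence (orbitRelR s t) := by
  constructor
  · intro x
    exact ⟨0, by norm_num [expc_zero']⟩
  · rintro x y ⟨θ, hθ⟩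
    refine ⟨-θ, ?_⟩
    rw [hθ]
    simp only [mul_neg]
    rw [Prod.mk.injEq]
    constructor <;> rw [expc_cancel']
  · rintro x y z ⟨θ, hθ⟩ ⟨φ, hφ⟩
    refine ⟨θ + φ, ?_⟩
    rw [hφ, hθ]
    simp only [mul_add, expc_add']
    rw [Prod.mk.injEq]
    constructor <;> ring

/-! ### the chart map -/

lemma sub_pos' (s t : ℝ) (hs : 0 < s) (ht : 0 < t) {z : ℂ} (hz : z ∈ ballR t) :
    0 < s - s / t * ‖z‖ ^ 2 := by
  have h1 : ‖z‖ ^ 2 < t := hz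
  have h2 : s / t * ‖z‖ ^ 2 < s / t * t := by
    exact mul_lt_mul_of_pos_left h1 (div_pos hs ht)
  rw [div_mul_cancel₀ _ ht.ne'] at h2
  linarith

noncomputable def chartPt (s t : ℝ) (z : ℂ) : ℂ × ℂ :=
  (z, ((Real.sqrt (s - s / t * ‖z‖ ^ 2) : ℝ) : ℂ))

lemma chartPt_mem (s t : ℝ) (hs : 0 < s) (ht : 0 < t) {z : ℂ} (hz : z ∈ ballR t) :
    chartPt s t z ∈ ellipsoidR s t := by
  have h := sub_pos' s t hs ht hz
  show s * ‖z‖ ^ 2 + t * ‖((Real.sqrt (s - s / t * ‖z‖ ^ 2) : ℝ) : ℂ)‖ ^ 2 = s * t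
  rw [Complex.norm_real, Real.norm_eq_abs, _root_.abs_of_nonneg (Real.sqrt_nonneg _), Real.sq_sqrt h.le]
  field_simp
  ring

noncomputable def Fmap (s t : ℝ) (hs : 0 < s) (ht : 0 < t) (b : ballR t) : ellipsoidR s t :=
  ⟨chartPt s t b, chartPt_mem s t hs ht b.2⟩

lemma Fmap_cont (s t : ℝ) (hs : 0 < s) (ht : 0 < t) : Continuous (Fmap s t hs ht) := by
  apply Continuous.subtype_mk
  refine Continuous.prodMk continuous_subtype_val ?_
  exact Complex.continuous_ofReal.comp
    ((continuous_const.sub (continuous_const.mul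
      ((continuous_norm.comp continuous_subtype_val).pow 2))).sqrt)

lemma F_sound (s t : ℝ) (hs : 0 < s) (ht : 0 < t) (x y : ballR t) (h : ballRelR s t x y) :
    orbitRelR s t (Fmap s t hs ht x) (Fmap s t hs ht y) := by
  obtain ⟨k, hk⟩ := h
  have habs : ‖(y : ℂ)‖ = ‖(x : ℂ)‖ := by
    rw [hk, norm_mul, abs_expc', one_mul]
  refine ⟨(k : ℝ) / t, ?_⟩
  have h1 : s * ((k : ℝ) / t) = (k : ℝ) * (s / t) := by ring
  have h2 : expc (t * ((k : ℝ) / t)) = 1 := by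
    rw [mul_div_cancel₀ _ ht.ne']
    exact (expc_eq_one_iff' _).mpr ⟨k, rfl⟩
  rw [Prod.ext_iff]
  constructor
  · show (y : ℂ) = expc (s * ((k : ℝ) / t)) * (x : ℂ)
    rw [h1]; exact hk
  · show ((Real.sqrt (s - s / t * ‖(y : ℂ)‖ ^ 2) : ℝ) : ℂ)
        = expc (t * ((k : ℝ) / t)) * ((Real.sqrt (s - s / t * ‖(x : ℂ)‖ ^ 2) : ℝ) : ℂ)
    rw [habs, h2, one_mul]

noncomputable def G0 (s t : ℝ) (hs : 0 < s) (ht : 0 < t) :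
    Quot (ballRelR s t) → Quot (orbitRelR s t) :=
  Quot.lift (fun b => Quot.mk _ (Fmap s t hs ht b))
    (fun a b h => Quot.sound (F_sound s t hs ht a b h))

lemma sqrt_ne_zero' (s t : ℝ) (hs : 0 < s) (ht : 0 < t) (b : ballR t) :
    ((Fmap s t hs ht b : ℂ × ℂ)).2 ≠ 0 := by
  show ((Real.sqrt (s - s / t * ‖(b : ℂ)‖ ^ 2) : ℝ) : ℂ) ≠ 0
  rw [Ne, Complex.ofReal_eq_zero]
  exact (Real.sqrt_pos.mpr (sub_pos' s t hs ht b.2)).ne'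

lemma G0_mem (s t : ℝ) (hs : 0 < s) (ht : 0 < t) (q : Quot (ballRelR s t)) :
    G0 s t hs ht q ∈ USR s t := by
  induction q using Quot.ind with
  | _ b => exact ⟨Fmap s t hs ht b, rfl, sqrt_ne_zero' s t hs ht b⟩

noncomputable def Gmap (s t : ℝ) (hs : 0 < s) (ht : 0 < t) (q : Quot (ballRelR s t)) :
    USR s t :=
  ⟨G0 s t hs ht q, G0_mem s t hs ht q⟩

/-! ### the inverse map -/

def Eset (s t : ℝ) : Set (ellipsoidR s t) := {x | (x : ℂ × ℂ).2 ≠ 0}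

lemma ell_eq (s t : ℝ) (x : ellipsoidR s t) :
    s * ‖(x : ℂ × ℂ).1‖ ^ 2 + t * ‖(x : ℂ × ℂ).2‖ ^ 2 = s * t := x.2

lemma ball_of_mem_E (s t : ℝ) (hs : 0 < s) (ht : 0 < t) (x : ellipsoidR s t)
    (hx : x ∈ Eset s t) : (x : ℂ × ℂ).1 ∈ ballR t := by
  have h2 : 0 < ‖(x : ℂ × ℂ).2‖ ^ 2 :=
    pow_pos (norm_pos_iff.mpr hx) 2
  have he := ell_eq s t x
  show ‖(x : ℂ × ℂ).1‖ ^ 2 < t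
  nlinarith

noncomputable def LmapB (s t : ℝ) (hs : 0 < s) (ht : 0 < t) (w₀ : ℂ) (x : Eset s t) :
    Quot (ballRelR s t) :=
  Quot.mk _ ⟨((x : ellipsoidR s t) : ℂ × ℂ).1 * expc (s * thetaB t w₀ ((x : ellipsoidR s t) : ℂ × ℂ).2), by
    show ‖_‖ ^ 2 < t
    rw [norm_mul, abs_expc', mul_one]
    exact ball_of_mem_E s t hs ht x.1 x.2⟩

noncomputable def Lmap (s t : ℝ) (hs : 0 < s) (ht : 0 < t) (x : Eset s t) :
    Quot (ballRelR s t) :=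
  LmapB s t hs ht 1 x

lemma theta_class (s t : ℝ) (hs : 0 < s) (ht : 0 < t) (w : ℂ) (hw : w ≠ 0) (θ₁ θ₂ : ℝ)
    (h1 : expc (t * θ₁) * w = (‖w‖ : ℂ))
    (h2 : expc (t * θ₂) * w = (‖w‖ : ℂ)) (z : ℂ) :
    ∃ k : ℤ, z * expc (s * θ₂) = expc ((k : ℝ) * (s / t)) * (z * expc (s * θ₁)) := by
  have he : expc (t * θ₂) = expc (t * θ₁) := mul_right_cancel₀ hw (h2.trans h1.symm)
  have h3 : expc (t * θ₂ + -(t * θ₁)) = 1 := by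
    rw [expc_add', he, mul_comm, expc_neg_mul']
  obtain ⟨k, hk⟩ := (expc_eq_one_iff' _).mp h3
  refine ⟨k, ?_⟩
  have hθ : θ₂ = ((k : ℝ) + t * θ₁) / t := by field_simp; linarith
  have hst : s * θ₂ = (k : ℝ) * (s / t) + s * θ₁ := by rw [hθ]; field_simp
  rw [hst, expc_add']; ring

lemma LmapB_spec (s t : ℝ) (ht : 0 < t) (w₀ : ℂ) (hw₀ : w₀ ≠ 0) (x : Eset s t) :
    expc (t * thetaB t w₀ ((x : ellipsoidR s t) : ℂ × ℂ).2) * ((x : ellipsoidR s t) : ℂ × ℂ).2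
      = (‖((x : ellipsoidR s t) : ℂ × ℂ).2‖ : ℂ) :=
  expc_thetaB_spec t ht.ne' w₀ _ hw₀ x.2

lemma LmapB_eq (s t : ℝ) (hs : 0 < s) (ht : 0 < t) (w₀ w₁ : ℂ) (hw₀ : w₀ ≠ 0)
    (hw₁ : w₁ ≠ 0) (x : Eset s t) :
    LmapB s t hs ht w₀ x = LmapB s t hs ht w₁ x := by
  obtain ⟨k, hk⟩ := theta_class s t hs ht _ x.2 _ _
    (LmapB_spec s t ht w₀ hw₀ x) (LmapB_spec s t ht w₁ hw₁ x)
    ((x : ellipsoidR s t) : ℂ × ℂ).1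
  exact Quot.sound ⟨k, hk⟩

lemma L_const (s t : ℝ) (hs : 0 < s) (ht : 0 < t) (x y : Eset s t)
    (h : orbitRelR s t x.1 y.1) : Lmap s t hs ht x = Lmap s t hs ht y := by
  obtain ⟨θ, hθ⟩ := h
  set z := ((x : ellipsoidR s t) : ℂ × ℂ).1 with hz
  set w := ((x : ellipsoidR s t) : ℂ × ℂ).2 with hw
  have hy1 : ((y : ellipsoidR s t) : ℂ × ℂ).1 = expc (s * θ) * z := by rw [hθ]
  have hy2 : ((y : ellipsoidR s t) : ℂ × ℂ).2 = expc (t * θ) * w := by rw [hθ]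
  have habs : ‖((y : ellipsoidR s t) : ℂ × ℂ).2‖ = ‖w‖ := by
    rw [hy2, norm_mul, abs_expc', one_mul]
  set θx := thetaB t 1 w with hθx
  have specx : expc (t * θx) * w = (‖w‖ : ℂ) := LmapB_spec s t ht 1 one_ne_zero x
  have specy' : expc (t * (thetaB t 1 ((y : ellipsoidR s t) : ℂ × ℂ).2 + θ)) * w
      = (‖w‖ : ℂ) := by
    have h0 := LmapB_spec s t ht 1 one_ne_zero y
    rw [mul_add, expc_add', mul_assoc, ← hy2, ← habs]
    exact h0
  obtain ⟨k, hk⟩ := theta_class s t hs ht w x.2 θx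
    (thetaB t 1 ((y : ellipsoidR s t) : ℂ × ℂ).2 + θ) specx specy' z
  apply Quot.sound
  refine ⟨k, ?_⟩
  show ((y : ellipsoidR s t) : ℂ × ℂ).1 * expc (s * thetaB t 1 ((y : ellipsoidR s t) : ℂ × ℂ).2) = _
  rw [hy1]
  calc expc (s * θ) * z * expc (s * thetaB t 1 ((y : ellipsoidR s t) : ℂ × ℂ).2)
      = z * expc (s * (thetaB t 1 ((y : ellipsoidR s t) : ℂ × ℂ).2 + θ)) := by
        rw [mul_add, expc_add']; ring
    _ = expc ((k : ℝ) * (s / t)) * (z * expc (s * θx)) := hk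

lemma L_const' (s t : ℝ) (hs : 0 < s) (ht : 0 < t) (x y : Eset s t)
    (h : Quot.mk (orbitRelR s t) x.1 = Quot.mk (orbitRelR s t) y.1) :
    Lmap s t hs ht x = Lmap s t hs ht y :=
  L_const s t hs ht x y (((orbitRel_equiv s t).eqvGen_iff).mp (Quot.eq.mp h))

lemma abs_snd_eq_sqrt (s t : ℝ) (hs : 0 < s) (ht : 0 < t) (x : ellipsoidR s t) :
    Real.sqrt (s - s / t * ‖(x : ℂ × ℂ).1‖ ^ 2) = ‖(x : ℂ × ℂ).2‖ := by
  have he := ell_eq s t x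
  have h1 : s - s / t * ‖(x : ℂ × ℂ).1‖ ^ 2 = ‖(x : ℂ × ℂ).2‖ ^ 2 := by
    field_simp
    nlinarith [he]
  rw [h1, Real.sqrt_sq (norm_nonneg _)]

lemma G0_L (s t : ℝ) (hs : 0 < s) (ht : 0 < t) (x : Eset s t) :
    G0 s t hs ht (Lmap s t hs ht x) = Quot.mk (orbitRelR s t) x.1 := by
  set z := ((x : ellipsoidR s t) : ℂ × ℂ).1 with hz
  set w := ((x : ellipsoidR s t) : ℂ × ℂ).2 with hw
  set θx := thetaB t 1 w with hθx
  have spec : expc (t * θx) * w = (‖w‖ : ℂ) := LmapB_spec s t ht 1 one_ne_zero x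
  refine (Quot.sound ?_).symm
  refine ⟨θx, ?_⟩
  rw [Prod.ext_iff]
  constructor
  · show z * expc (s * θx) = expc (s * θx) * z
    ring
  · show ((Real.sqrt (s - s / t * ‖(z * expc (s * θx))‖ ^ 2) : ℝ) : ℂ)
        = expc (t * θx) * w
    rw [norm_mul, abs_expc', mul_one, spec]
    norm_cast
    exact abs_snd_eq_sqrt s t hs ht x.1

lemma L_F (s t : ℝ) (hs : 0 < s) (ht : 0 < t) (b : ballR t)
    (hne : Fmap s t hs ht b ∈ Eset s t) :
    Lmap s t hs ht ⟨Fmap s t hs ht b, hne⟩ = Quot.mk (ballRelR s t) b := by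
  set x : Eset s t := ⟨Fmap s t hs ht b, hne⟩ with hxdef
  set w := ((x : ellipsoidR s t) : ℂ × ℂ).2 with hw
  have hwr : w = ((Real.sqrt (s - s / t * ‖(b : ℂ)‖ ^ 2) : ℝ) : ℂ) := rfl
  have spec0 : expc (t * 0) * w = (‖w‖ : ℂ) := by
    rw [mul_zero, expc_zero', one_mul, hwr, Complex.norm_real, Real.norm_eq_abs,
      _root_.abs_of_nonneg (Real.sqrt_nonneg _)]
  have spec : expc (t * thetaB t 1 w) * w = (‖w‖ : ℂ) :=
    LmapB_spec s t ht 1 one_ne_zero x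
  obtain ⟨k, hk⟩ := theta_class s t hs ht w x.2 (thetaB t 1 w) 0 spec spec0 (b : ℂ)
  refine Quot.sound ⟨k, ?_⟩
  show (b : ℂ) = _
  rw [mul_zero, expc_zero', mul_one] at hk
  exact hk

noncomputable def Ginv (s t : ℝ) (hs : 0 < s) (ht : 0 < t) (o : USR s t) :
    Quot (ballRelR s t) :=
  have ho : ∃ x : ellipsoidR s t,
      Quot.mk (orbitRelR s t) x = (o : Quot (orbitRelR s t)) ∧ (x : ℂ × ℂ).2 ≠ 0 := o.2
  Lmap s t hs ht ⟨ho.choose, ho.choose_spec.2⟩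

lemma Ginv_eq (s t : ℝ) (hs : 0 < s) (ht : 0 < t) (o : USR s t) (x : Eset s t)
    (hx : Quot.mk (orbitRelR s t) x.1 = (o : Quot (orbitRelR s t))) :
    Ginv s t hs ht o = Lmap s t hs ht x := by
  have ho : ∃ x : ellipsoidR s t,
      Quot.mk (orbitRelR s t) x = (o : Quot (orbitRelR s t)) ∧ (x : ℂ × ℂ).2 ≠ 0 := o.2
  show Lmap s t hs ht ⟨ho.choose, ho.choose_spec.2⟩ = _
  exact L_const' s t hs ht _ _ (ho.choose_spec.1.trans hx.symm)

lemma left_inv' (s t : ℝ) (hs : 0 < s) (ht : 0 < t) (q : Quot (ballRelR s t)) :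
    Ginv s t hs ht (Gmap s t hs ht q) = q := by
  induction q using Quot.ind with
  | _ b =>
    have hne : Fmap s t hs ht b ∈ Eset s t := sqrt_ne_zero' s t hs ht b
    rw [Ginv_eq s t hs ht _ ⟨Fmap s t hs ht b, hne⟩ rfl]
    exact L_F s t hs ht b hne

lemma right_inv' (s t : ℝ) (hs : 0 < s) (ht : 0 < t) (o : USR s t) :
    Gmap s t hs ht (Ginv s t hs ht o) = o := by
  have ho : ∃ x : ellipsoidR s t,
      Quot.mk (orbitRelR s t) x = (o : Quot (orbitRelR s t)) ∧ (x : ℂ × ℂ).2 ≠ 0 := o.2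
  have h1 : Ginv s t hs ht o = Lmap s t hs ht ⟨ho.choose, ho.choose_spec.2⟩ := rfl
  apply Subtype.ext
  show G0 s t hs ht (Ginv s t hs ht o) = (o : Quot (orbitRelR s t))
  rw [h1, G0_L s t hs ht ⟨ho.choose, ho.choose_spec.2⟩]
  exact ho.choose_spec.1

/-! ### continuity -/

lemma G0_cont (s t : ℝ) (hs : 0 < s) (ht : 0 < t) : Continuous (G0 s t hs ht) :=
  continuous_quot_lift _ (continuous_quot_mk.comp (Fmap_cont s t hs ht))

lemma Gmap_cont (s t : ℝ) (hs : 0 < s) (ht : 0 < t) : Continuous (Gmap s t hs ht) :=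
  (G0_cont s t hs ht).subtype_mk _

noncomputable def rotEll (s t : ℝ) (θ : ℝ) (x : ellipsoidR s t) : ellipsoidR s t :=
  ⟨(expc (s * θ) * (x : ℂ × ℂ).1, expc (t * θ) * (x : ℂ × ℂ).2), by
    show s * ‖_‖ ^ 2 + t * ‖_‖ ^ 2 = s * t
    rw [norm_mul, norm_mul, abs_expc', abs_expc', one_mul, one_mul]
    exact ell_eq s t x⟩

lemma rotEll_cont (s t : ℝ) (θ : ℝ) : Continuous (rotEll s t θ) := by
  apply Continuous.subtype_mk
  exact (continuous_const.mul ((continuous_fst.comp continuous_subtype_val))).prodMk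
    (continuous_const.mul ((continuous_snd.comp continuous_subtype_val)))

lemma rotEll_rotEll (s t : ℝ) (θ : ℝ) (x : ellipsoidR s t) :
    rotEll s t (-θ) (rotEll s t θ x) = x := by
  apply Subtype.ext
  show (expc (s * -θ) * (expc (s * θ) * (x : ℂ × ℂ).1),
        expc (t * -θ) * (expc (t * θ) * (x : ℂ × ℂ).2)) = (x : ℂ × ℂ)
  rw [mul_neg, mul_neg, expc_cancel', expc_cancel']

lemma rotEll_image_open (s t : ℝ) (θ : ℝ) {U : Set (ellipsoidR s t)} (hU : IsOpen U) :
    IsOpen (rotEll s t θ '' U) := by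
  have himg : rotEll s t θ '' U = rotEll s t (-θ) ⁻¹' U := by
    ext x
    constructor
    · rintro ⟨y, hy, rfl⟩
      show rotEll s t (-θ) (rotEll s t θ y) ∈ U
      rw [rotEll_rotEll]; exact hy
    · intro hx
      refine ⟨rotEll s t (-θ) x, hx, ?_⟩
      have := rotEll_rotEll s t (-θ) x
      rw [neg_neg] at this
      exact this
  rw [himg]
  exact hU.preimage (rotEll_cont s t (-θ))

lemma openMap_mk_orbit (s t : ℝ) :
    IsOpenMap (Quot.mk (orbitRelR s t) : ellipsoidR s t → Quot (orbitRelR s t)) := by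
  intro U hU
  rw [← isQuotientMap_quot_mk.isOpen_preimage]
  have hsat : Quot.mk (orbitRelR s t) ⁻¹' (Quot.mk (orbitRelR s t) '' U)
      = ⋃ θ : ℝ, rotEll s t θ '' U := by
    ext x
    simp only [Set.mem_preimage, Set.mem_image, Set.mem_iUnion]
    constructor
    · rintro ⟨y, hy, hxy⟩
      obtain ⟨θ, hθ⟩ := ((orbitRel_equiv s t).eqvGen_iff).mp (Quot.eq.mp hxy)
      exact ⟨θ, y, hy, (Subtype.ext hθ).symm⟩
    · rintro ⟨θ, y, hy, rfl⟩
      exact ⟨y, hy, Quot.sound ⟨θ, rfl⟩⟩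
  rw [hsat]
  exact isOpen_iUnion fun θ => rotEll_image_open s t θ hU

noncomputable def qE (s t : ℝ) (x : Eset s t) : USR s t :=
  ⟨Quot.mk (orbitRelR s t) x.1, ⟨x.1, rfl, x.2⟩⟩

lemma qE_cont (s t : ℝ) : Continuous (qE s t) :=
  (continuous_quot_mk.comp continuous_subtype_val).subtype_mk _

lemma qE_surj (s t : ℝ) : Function.Surjective (qE s t) := by
  rintro ⟨o, x, hx, hne⟩
  exact ⟨⟨x, hne⟩, Subtype.ext hx⟩

lemma Eset_open (s t : ℝ) : IsOpen (Eset s t) := by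
  have : Eset s t = (fun x : ellipsoidR s t => (x : ℂ × ℂ).2) ⁻¹' {(0 : ℂ)}ᶜ := rfl
  rw [this]
  exact isOpen_compl_singleton.preimage (continuous_snd.comp continuous_subtype_val)

lemma qE_open (s t : ℝ) : IsOpenMap (qE s t) := by
  intro V hV
  have hV' : IsOpen (Subtype.val '' V : Set (ellipsoidR s t)) :=
    (Eset_open s t).isOpenMap_subtype_val V hV
  have hVq : IsOpen (Quot.mk (orbitRelR s t) '' (Subtype.val '' V)) :=
    openMap_mk_orbit s t _ hV'
  have himg : qE s t '' V
      = Subtype.val ⁻¹' (Quot.mk (orbitRelR s t) '' (Subtype.val '' V)) := by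
    ext o
    simp only [Set.mem_image, Set.mem_preimage]
    constructor
    · rintro ⟨x, hx, rfl⟩
      exact ⟨x.1, ⟨x, hx, rfl⟩, rfl⟩
    · rintro ⟨v, ⟨x, hx, rfl⟩, hv⟩
      exact ⟨x, hx, Subtype.ext hv⟩
  rw [himg]
  exact hVq.preimage continuous_subtype_val

lemma qE_quotientMap (s t : ℝ) : Topology.IsQuotientMap (qE s t) :=
  (qE_open s t).isQuotientMap (qE_cont s t) (qE_surj s t)

lemma one_mem_slitPlane' : (1 : ℂ) ∈ Complex.slitPlane := by
  rw [Complex.mem_slitPlane_iff]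
  left; norm_num

lemma LmapB_cont_at (s t : ℝ) (hs : 0 < s) (ht : 0 < t) (x₀ : Eset s t) :
    ContinuousAt (LmapB s t hs ht ((x₀ : ellipsoidR s t) : ℂ × ℂ).2) x₀ := by
  set w₀ := ((x₀ : ellipsoidR s t) : ℂ × ℂ).2 with hw₀def
  have hw₀ : w₀ ≠ 0 := x₀.2
  have hθ : ContinuousAt (fun w : ℂ => thetaB t w₀ w) w₀ := by
    have hdiv : ContinuousAt (fun w : ℂ => w / w₀) w₀ := (continuous_id.div_const w₀).continuousAt
    have harg : ContinuousAt Complex.arg (w₀ / w₀) := by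
      rw [div_self hw₀]
      exact Complex.continuousAt_arg one_mem_slitPlane'
    exact (((ContinuousAt.comp (f := fun w : ℂ => w / w₀) harg hdiv).add
      continuousAt_const).neg).div_const _
  have hw : ContinuousAt (fun x : Eset s t => ((x : ellipsoidR s t) : ℂ × ℂ).2) x₀ :=
    (continuous_snd.comp (continuous_subtype_val.comp continuous_subtype_val)).continuousAt
  have hf : ContinuousAt (fun x : Eset s t =>
      ((x : ellipsoidR s t) : ℂ × ℂ).1 * expc (s * thetaB t w₀ ((x : ellipsoidR s t) : ℂ × ℂ).2)) x₀ := by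
    refine ContinuousAt.mul ?_ ?_
    · exact (continuous_fst.comp (continuous_subtype_val.comp continuous_subtype_val)).continuousAt
    · exact expc_cont.continuousAt.comp
        ((continuousAt_const.mul continuousAt_id).comp (ContinuousAt.comp (g := fun w : ℂ => thetaB t w₀ w)
          (f := fun x : Eset s t => ((x : ellipsoidR s t) : ℂ × ℂ).2) hθ hw))
  have hmem : ∀ x : Eset s t,
      ((x : ellipsoidR s t) : ℂ × ℂ).1 * expc (s * thetaB t w₀ ((x : ellipsoidR s t) : ℂ × ℂ).2)
        ∈ ballR t := fun x => by
    show ‖_‖ ^ 2 < t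
    rw [norm_mul, abs_expc', mul_one]
    exact ball_of_mem_E s t hs ht x.1 x.2
  exact continuous_quot_mk.continuousAt.comp (hf.codRestrict hmem)

lemma Lmap_cont (s t : ℝ) (hs : 0 < s) (ht : 0 < t) : Continuous (Lmap s t hs ht) := by
  rw [continuous_iff_continuousAt]
  intro x₀
  have heq : Lmap s t hs ht = LmapB s t hs ht ((x₀ : ellipsoidR s t) : ℂ × ℂ).2 := by
    funext x
    exact LmapB_eq s t hs ht 1 _ one_ne_zero x₀.2 x
  rw [heq]
  exact LmapB_cont_at s t hs ht x₀

lemma Ginv_cont (s t : ℝ) (hs : 0 < s) (ht : 0 < t) : Continuous (Ginv s t hs ht) := by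
  rw [(qE_quotientMap s t).continuous_iff]
  have heq : Ginv s t hs ht ∘ qE s t = Lmap s t hs ht := by
    funext x
    exact Ginv_eq s t hs ht (qE s t x) x rfl
  rw [heq]
  exact Lmap_cont s t hs ht

noncomputable def chartHomeo (s t : ℝ) (hs : 0 < s) (ht : 0 < t) :
    Quot (ballRelR s t) ≃ₜ USR s t where
  toFun := Gmap s t hs ht
  invFun := Ginv s t hs ht
  left_inv := left_inv' s t hs ht
  right_inv := right_inv' s t hs ht
  continuous_toFun := Gmap_cont s t hs ht
  continuous_invFun := Ginv_cont s t hs ht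

/-- For `s, t > 0` with `s/t` irrational, the countable group `Γ_{s/t}` acts on `B(t)` by
complex multiplication, and the map `B(t)/Γ_{s/t} → U_S`, `[z] ↦ [z : √(s − (s/t)|z|²)]`,
is well defined and a homeomorphism (quotient topology on the source, subspace topology
from the quotient topology on the target). -/
theorem quasisphere_chart_S (s t : ℝ) (hs : 0 < s) (ht : 0 < t)
    (hst : Irrational (s / t)) :
    (∀ z : ℂ, z ∈ ballR t → ∀ k : ℤ, expc ((k : ℝ) * (s / t)) * z ∈ ballR t) ∧
    ∃ h : Quot (ballRelR s t) ≃ₜ USR s t,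
      ∀ (z : ℂ) (hz : z ∈ ballR t) (x : ellipsoidR s t),
        (x : ℂ × ℂ) = (z, (Real.sqrt (s - s / t * ‖z‖ ^ 2) : ℂ)) →
          (h (Quot.mk (ballRelR s t) ⟨z, hz⟩) : Quot (orbitRelR s t)) =
            Quot.mk (orbitRelR s t) x := by
  refine ⟨?_, chartHomeo s t hs ht, ?_⟩
  · intro z hz k
    show ‖_‖ ^ 2 < t
    rw [norm_mul, abs_expc', one_mul]
    exact hz
  · intro z hz x hx
    have hfx : Fmap s t hs ht ⟨z, hz⟩ = x := Subtype.ext (by rw [hx]; rfl)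
    show G0 s t hs ht (Quot.mk (ballRelR s t) ⟨z, hz⟩) = Quot.mk (orbitRelR s t) x
    show Quot.mk (orbitRelR s t) (Fmap s t hs ht ⟨z, hz⟩) = Quot.mk (orbitRelR s t) x
    rw [hfx]
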